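/- A Cauchy-based regular-graph MBR code for D(n,k,d) is b-block secure against an adversary of strength ℓ < k, where b = (kd − C(k,2)) − (ℓd − C(ℓ,2)). Formally: if G is an (nd/2)×M matrix over F_q (M = kd − C(k,2), nd/2 ≥ M) all of whose square submatrices are invertible, c = G f^t, and E is the submatrix of G consisting of any ℓd − C(ℓ,2) rows (the coded units seen by the adversary), then no nontrivial linear combination of at most b coordinates of f can be deduced from E f^t; equivalently the row-space code of E has minimum distance b + 1. -/

import Mathlib

/-- block security of Cauchy-based regular-graph MBR codes.  If `G` is an
`(nd/2) × M` encoding matrix (with `M = kd - C(k,2)`) all of whose square submatrices are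
invertible, and the adversary observes the `R = ℓd - C(ℓ,2)` coded units `E fᵗ` given by
`R` rows `E` of `G` (with `ℓ < k`), then no nontrivial linear combination of at most
`b = M - R` coordinates of `f` can be deduced: every nonzero codeword of the row-space
code of `E` has Hamming weight greater than `b` (i.e. its minimum distance is `≥ b + 1`). -/
theorem stmt8 {F : Type*} [Field F] [Fintype F] [DecidableEq F]
    (n k d ℓ M R b : ℕ)
    (hM : M = k * d - k * (k - 1) / 2)
    (hR : R = ℓ * d - ℓ * (ℓ - 1) / 2)
    (hb : b = M - R)
    (hkd : k ≤ d) (hlk : ℓ < k) (hdn : d < n) (hMn : M ≤ n * d / 2)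
    (G : Matrix (Fin (n * d / 2)) (Fin M) F)
    (hG : ∀ (r : ℕ) (I : Fin r → Fin (n * d / 2)) (J : Fin r → Fin M),
      Function.Injective I → Function.Injective J →
        IsUnit ((G.submatrix I J).det))
    (ρ : Fin R → Fin (n * d / 2)) (hρ : Function.Injective ρ) :
    ∀ α : Fin R → F, Matrix.vecMul α (G.submatrix ρ id) ≠ 0 →
      b < hammingNorm (Matrix.vecMul α (G.submatrix ρ id)) := by
  intro α hv
  set v := Matrix.vecMul α (G.submatrix ρ id) with hvdef
  by_contra hcon
  push_neg at hcon
  -- weight is positive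
  have hwpos : 0 < hammingNorm v := hammingNorm_pos_iff.mpr hv
  -- the set of zero coordinates
  set Z : Finset (Fin M) := Finset.univ.filter (fun j => v j = 0) with hZ
  have hcardsum : (Finset.univ.filter (fun j => v j = 0)).card
      + (Finset.univ.filter (fun j => ¬ v j = 0)).card = M := by
    rw [Finset.card_filter_add_card_filter_not]
    simp
  have hnorm : hammingNorm v = (Finset.univ.filter (fun j => ¬ v j = 0)).card := by
    simp [hammingNorm]
  have hZcard : R ≤ Z.card := by
    rw [hZ]
    omega
  obtain ⟨Z', hZ'sub, hZ'card⟩ := Finset.exists_subset_card_eq hZcard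
  set J : Fin R → Fin M := fun i => (Z'.orderIsoOfFin hZ'card i : Fin M) with hJ
  have hJinj : Function.Injective J := by
    intro a b hab
    exact (Z'.orderIsoOfFin hZ'card).injective (Subtype.val_injective hab)
  have hJ0 : ∀ i, v (J i) = 0 := by
    intro i
    have hmem : J i ∈ Z' := (Z'.orderIsoOfFin hZ'card i).2
    have := hZ'sub hmem
    rw [hZ, Finset.mem_filter] at this
    exact this.2
  set A := G.submatrix ρ J with hA
  have hAdet : IsUnit A.det := hG R ρ J hρ hJinj
  have hαA : Matrix.vecMul α A = 0 := by
    funext i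
    have : Matrix.vecMul α A i = v (J i) := by
      simp [hA, hvdef, Matrix.vecMul, dotProduct, Matrix.submatrix_apply]
    rw [this, hJ0]
    simp
  have hα : α = 0 := by
    have h1 : Matrix.vecMul α (A * A⁻¹) = 0 := by
      rw [← Matrix.vecMul_vecMul, hαA, Matrix.zero_vecMul]
    rwa [Matrix.mul_nonsing_inv A hAdet, Matrix.vecMul_one] at h1
  apply hv
  rw [hvdef, hα, Matrix.zero_vecMul]
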